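/- Let m ≥ 1, let y_0 < y_1 < ⋯ < y_m be real numbers, let c_j < d_j for j ∈ {1,…,m}, let L_{2,j} : ℝ → ℝ be the affine map with L_{2,j}(c_j) = y_{j−1} and L_{2,j}(d_j) = y_j, and define φ_j(y) = d_j if y > y_j, φ_j(y) = L_{2,j}^{−1}(y) if y_{j−1} ≤ y ≤ y_j, φ_j(y) = c_j if y < y_{j−1}. Let f : ℝ × ℝ → ℝ and set f_{0,j}(x,y) = f(x, L_{2,j}(y)). Then for every real number x_i and every y ∈ [y_0, y_m], f(x_i, y) = ∑_{j=1}^m f_{0,j}(x_i, φ_j(y)) − ∑_{j=1}^{m−1} f(x_i, y_j). -/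

import Mathlib

/-- The affine map `L_{2,j}(t) = y_{j−1} + (t − c_j)·(y_j − y_{j−1})/(d_j − c_j)`,
so that `L_{2,j}(c_j) = y_{j−1}` and `L_{2,j}(d_j) = y_j`. -/
noncomputable def LFun (y c d : ℕ → ℝ) (j : ℕ) (t : ℝ) : ℝ :=
  y (j - 1) + (t - c j) * (y j - y (j - 1)) / (d j - c j)

/-- The clamped inverse of `L_{2,j}`:
`φ_j(t) = d_j` for `t > y_j`, `φ_j(t) = L_{2,j}⁻¹(t)` on `[y_{j−1}, y_j]`,
and `φ_j(t) = c_j` for `t < y_{j−1}`. -/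
noncomputable def clampInv (y c d : ℕ → ℝ) (j : ℕ) (t : ℝ) : ℝ :=
  if y j < t then d j
  else if y (j - 1) ≤ t then c j + (t - y (j - 1)) * (d j - c j) / (y j - y (j - 1))
  else c j

lemma LFun_clampInv (y c d : ℕ → ℝ) (j : ℕ) (v : ℝ) (hyj : y (j - 1) < y j)
    (hc : c j < d j) :
    LFun y c d j (clampInv y c d j v) =
      if y j < v then y j else if y (j - 1) ≤ v then v else y (j - 1) := by
  have h1 : d j - c j ≠ 0 := by linarith
  have h2 : y j - y (j - 1) ≠ 0 := by linarith
  unfold LFun clampInv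
  split_ifs with ha hb
  · field_simp
    ring
  · field_simp
    ring
  · simp

lemma y_mono (m : ℕ) (y : ℕ → ℝ) (hy : ∀ j ∈ Finset.Icc 1 m, y (j - 1) < y j) :
    ∀ i j : ℕ, i ≤ j → j ≤ m → y i ≤ y j := by
  intro i j hij hjm
  induction j with
  | zero => simp_all
  | succ k ihk =>
    rcases Nat.eq_or_lt_of_le hij with h | h
    · rw [h]
    · have hik : i ≤ k := Nat.lt_succ_iff.mp h
      have h1 : y i ≤ y k := ihk hik (by omega)
      have h2 : y k < y (k + 1) := by
        have := hy (k + 1) (by simp; omega)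
        simpa using this
      linarith

/-- Decomposition in the second variable at a fixed first coordinate:
`f(x_i, y) = ∑_{j=1}^m f_{0,j}(x_i, φ_j(y)) − ∑_{j=1}^{m−1} f(x_i, y_j)`
for every real `x_i` and every `y ∈ [y_0, y_m]`, where
`f_{0,j}(x, y) = f(x, L_{2,j}(y))`. -/
theorem decomposition_second_variable (m : ℕ) (hm : 1 ≤ m) (y c d : ℕ → ℝ)
    (hy : ∀ j ∈ Finset.Icc 1 m, y (j - 1) < y j)
    (hcd : ∀ j ∈ Finset.Icc 1 m, c j < d j)
    (f : ℝ → ℝ → ℝ) :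
    ∀ xi : ℝ, ∀ v ∈ Set.Icc (y 0) (y m),
      f xi v = (∑ j ∈ Finset.Icc 1 m, f xi (LFun y c d j (clampInv y c d j v)))
                 - ∑ j ∈ Finset.Icc 1 (m - 1), f xi (y j) := by
  intro xi
  revert hy hcd
  induction m, hm using Nat.le_induction with
  | base =>
    intro hy hcd v hv
    have h1 := hy 1 (by simp)
    have h2 := hcd 1 (by simp)
    simp only [Nat.sub_self, Finset.Icc_self, Finset.sum_singleton,
      show Finset.Icc 1 0 = (∅ : Finset ℕ) from rfl, Finset.sum_empty, sub_zero]
    rw [LFun_clampInv y c d 1 v h1 h2]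
    simp only [Nat.sub_self] at *
    have hnlt : ¬ y 1 < v := not_lt.mpr hv.2
    rw [if_neg hnlt, if_pos hv.1]
  | succ n hn ih =>
    intro hy hcd v hv
    have hy' : ∀ j ∈ Finset.Icc 1 n, y (j - 1) < y j := fun j hj =>
      hy j (by simp at hj ⊢; omega)
    have hcd' : ∀ j ∈ Finset.Icc 1 n, c j < d j := fun j hj =>
      hcd j (by simp at hj ⊢; omega)
    have hsucc : y n < y (n + 1) := by
      have := hy (n + 1) (by simp)
      simpa using this
    have hsplit1 : (∑ j ∈ Finset.Icc 1 (n + 1), f xi (LFun y c d j (clampInv y c d j v)))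
        = (∑ j ∈ Finset.Icc 1 n, f xi (LFun y c d j (clampInv y c d j v)))
          + f xi (LFun y c d (n + 1) (clampInv y c d (n + 1) v)) :=
      Finset.sum_Icc_succ_top (by omega) _
    have hn1 : n - 1 + 1 = n := Nat.succ_pred_eq_of_pos hn
    have hsplit2 : (∑ j ∈ Finset.Icc 1 n, f xi (y j))
        = (∑ j ∈ Finset.Icc 1 (n - 1), f xi (y j)) + f xi (y n) := by
      rw [← hn1, Finset.sum_Icc_succ_top (by omega)]
      simp [hn1]
    have hclamp : LFun y c d (n + 1) (clampInv y c d (n + 1) v) =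
        if y (n + 1) < v then y (n + 1) else if y n ≤ v then v else y n := by
      have := LFun_clampInv y c d (n + 1) v (by simpa using hy (n + 1) (by simp))
        (hcd (n + 1) (by simp))
      simpa using this
    simp only [Nat.add_sub_cancel]
    rw [hsplit1, hsplit2, hclamp]
    by_cases h : v ≤ y n
    · have IH := ih hy' hcd' v ⟨hv.1, h⟩
      have hne : ¬ y (n + 1) < v := by linarith
      rw [if_neg hne]
      have hlast : (if y n ≤ v then v else y n) = y n := by
        split_ifs with h2
        · linarith
        · rfl
      rw [hlast]
      linarith [IH]
    · push_neg at h
      have hne : ¬ y (n + 1) < v := not_lt.mpr hv.2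
      rw [if_neg hne, if_pos (le_of_lt h)]
      have hcong : (∑ j ∈ Finset.Icc 1 n, f xi (LFun y c d j (clampInv y c d j v)))
          = ∑ j ∈ Finset.Icc 1 n, f xi (y j) := by
        apply Finset.sum_congr rfl
        intro j hj
        simp only [Finset.mem_Icc] at hj
        rw [LFun_clampInv y c d j v (hy' j (by simp [hj])) (hcd' j (by simp [hj]))]
        have hjv : y j < v := lt_of_le_of_lt (y_mono (n + 1) y hy j n hj.2 (by omega)) h
        rw [if_pos hjv]
      rw [hcong, hsplit2]
      ring
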